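/- Let μ, ν be probability measures on X, X₁,…,Xₙ i.i.d. with law μ, and T = T(X₁,…,Xₙ) an unbiased estimator with values in R^q, with covariance matrix Var(T). If E_{μ^⊗n}[T] = ψ(μ) and E_{ν^⊗n}[T] = ψ(ν), then the matrix inequality Var(T) ≥ (ψ(μ) - ψ(ν))(ψ(μ) - ψ(ν))ᵗ / ((d(μ,ν) + 1)^n - 1) holds in the sense of positive semi-definiteness (assuming 0 < d(μ,ν) < ∞). -/

import Mathlib

open MeasureTheory

section VarAux
open ENNReal NNReal Set

variable {α : Type*} [MeasurableSpace α] {μ' : Measure α}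

lemma aux_l2_mul_integrable {f g : α → ℝ} (hf : MemLp f 2 μ') (hg : MemLp g 2 μ') :
    Integrable (fun x => f x * g x) μ' := by
  have h := L2.integrable_inner (𝕜 := ℝ) (hf.toLp f) (hg.toLp g)
  refine h.congr ?_
  filter_upwards [hf.coeFn_toLp, hg.coeFn_toLp] with x h1 h2
  simp [RCLike.inner_apply, h1, h2]
  ring

lemma aux_l2_cauchy {f g : α → ℝ} (hf : MemLp f 2 μ') (hg : MemLp g 2 μ') :
    (∫ x, f x * g x ∂μ') ^ 2 ≤ (∫ x, f x * f x ∂μ') * (∫ x, g x * g x ∂μ') := by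
  have h := real_inner_mul_inner_self_le (hf.toLp f) (hg.toLp g)
  have key : ∀ (u v : α → ℝ) (hu : MemLp u 2 μ') (hv : MemLp v 2 μ'),
      (inner ℝ (hu.toLp u) (hv.toLp v) : ℝ) = ∫ x, u x * v x ∂μ' := by
    intro u v hu hv
    rw [L2.inner_def]
    refine integral_congr_ae ?_
    filter_upwards [hu.coeFn_toLp, hv.coeFn_toLp] with x h1 h2
    simp [RCLike.inner_apply, h1, h2]
    ring
  rw [key f g hf hg, key f f hf hf, key g g hg hg] at h
  calc (∫ x, f x * g x ∂μ') ^ 2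
      = (∫ x, f x * g x ∂μ') * (∫ x, f x * g x ∂μ') := sq _
    _ ≤ _ := h

lemma aux_lintegral_pi_prod {X : Type*} [MeasurableSpace X] (μ : Measure X) [SigmaFinite μ] :
    ∀ {n : ℕ} (f : Fin n → X → ℝ≥0∞), (∀ i, Measurable (f i)) →
      ∫⁻ x : Fin n → X, ∏ i, f i (x i) ∂(Measure.pi fun _ => μ) = ∏ i, ∫⁻ x, f i x ∂μ := by
  intro n
  induction n with
  | zero => intro f hf; simp
  | succ n ih =>
    intro f hf
    have h := (measurePreserving_piFinSuccAbove (fun _ : Fin (n + 1) => μ) 0).symm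
    rw [← h.lintegral_comp_emb (MeasurableEquiv.measurableEmbedding _)]
    simp_rw [MeasurableEquiv.piFinSuccAbove_symm_apply, Fin.insertNthEquiv, Equiv.coe_fn_mk,
      Fin.insertNth_zero, cast_eq, Fin.prod_univ_succ, Fin.cons_zero, Fin.cons_succ]
    rw [lintegral_prod_mul (f := f 0) (g := fun (y : Fin n → X) => ∏ i : Fin n, f i.succ (y i))
      (hf 0).aemeasurable
      (Finset.measurable_prod Finset.univ fun i _ =>
        (hf i.succ).comp (measurable_pi_apply i)).aemeasurable]
    rw [ih (fun i => f i.succ) (fun i => hf i.succ)]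

lemma aux_pi_nu_eq {X : Type*} [MeasurableSpace X] (μ ν : Measure X) [IsProbabilityMeasure μ]
    [IsProbabilityMeasure ν] (hac : ν ≪ μ) (n : ℕ) :
    (Measure.pi fun _ : Fin n => ν) =
      (Measure.pi fun _ : Fin n => μ).withDensity
        (fun x => ((∏ i, (ν.rnDeriv μ (x i)).toNNReal : ℝ≥0) : ℝ≥0∞)) := by
  have hrn : ∀ t : Set X, MeasurableSet t →
      ∫⁻ y in t, (((ν.rnDeriv μ y).toNNReal : ℝ≥0) : ℝ≥0∞) ∂μ = ν t := by
    intro t ht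
    have hae : (fun y => (((ν.rnDeriv μ y).toNNReal : ℝ≥0) : ℝ≥0∞)) =ᵐ[μ] ν.rnDeriv μ := by
      filter_upwards [Measure.rnDeriv_lt_top ν μ] with y hy
      exact ENNReal.coe_toNNReal hy.ne
    rw [lintegral_congr_ae (ae_restrict_of_ae hae), Measure.setLIntegral_rnDeriv hac]
  refine Measure.pi_eq fun s hs => ?_
  rw [withDensity_apply _ (MeasurableSet.univ_pi hs), ← lintegral_indicator
    (MeasurableSet.univ_pi hs) (fun x => ((∏ i, (ν.rnDeriv μ (x i)).toNNReal : ℝ≥0) : ℝ≥0∞))]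
  have heq : (univ.pi s).indicator
        (fun x => ((∏ i, (ν.rnDeriv μ (x i)).toNNReal : ℝ≥0) : ℝ≥0∞))
      = fun x => ∏ i, (s i).indicator
          (fun y => (((ν.rnDeriv μ y).toNNReal : ℝ≥0) : ℝ≥0∞)) (x i) := by
    funext x
    by_cases hx : x ∈ univ.pi s
    · rw [Set.indicator_of_mem hx]
      push_cast
      refine Finset.prod_congr rfl fun i _ => ?_
      rw [Set.indicator_of_mem (hx i (Set.mem_univ i))]
    · rw [Set.indicator_of_notMem hx]
      rw [Set.mem_univ_pi] at hx
      push_neg at hx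
      obtain ⟨i, hi⟩ := hx
      exact (Finset.prod_eq_zero (Finset.mem_univ i)
        (by rw [Set.indicator_of_notMem hi])).symm
  rw [heq, aux_lintegral_pi_prod μ _ (fun i =>
    ((Measure.measurable_rnDeriv ν μ).ennreal_toNNReal.coe_nnreal_ennreal).indicator (hs i))]
  exact Finset.prod_congr rfl fun i _ => by rw [lintegral_indicator (hs i), hrn _ (hs i)]

end VarAux

/-- Multivariate variance lower bound: for an `ℝ^q`-valued unbiased estimator `T` from `n`
i.i.d. observations, the covariance matrix dominates
`(ψ(μ) - ψ(ν))(ψ(μ) - ψ(ν))ᵗ / ((d(μ,ν) + 1)^n - 1)` in the positive semi-definite order,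
where `d(μ,ν) = ∫ (1 - dν/dμ)² dμ` with `0 < d(μ,ν) < ∞`. -/
theorem variance_matrix_lower_bound {X : Type*} [MeasurableSpace X] (μ ν : Measure X)
    [IsProbabilityMeasure μ] [IsProbabilityMeasure ν]
    (hac : ν ≪ μ) (hL2 : MemLp (fun x => (ν.rnDeriv μ x).toReal) 2 μ)
    (d : ℝ) (hd : d = ∫ x, (1 - (ν.rnDeriv μ x).toReal) ^ 2 ∂μ) (hdpos : 0 < d)
    (n q : ℕ) (T : (Fin n → X) → Fin q → ℝ)
    (hT : ∀ i, MemLp (fun x => T x i) 2 (Measure.pi fun _ : Fin n => μ))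
    (ψμ ψν : Fin q → ℝ)
    (hμ : ∀ i, ∫ x, T x i ∂(Measure.pi fun _ : Fin n => μ) = ψμ i)
    (hν : ∀ i, ∫ x, T x i ∂(Measure.pi fun _ : Fin n => ν) = ψν i) :
    (Matrix.of (fun i j =>
        (∫ x, (T x i - ψμ i) * (T x j - ψμ j) ∂(Measure.pi fun _ : Fin n => μ))
          - (ψμ i - ψν i) * (ψμ j - ψν j) / ((d + 1) ^ n - 1))).PosSemidef := by
  classical
  set f : X → ℝ := fun y => (ν.rnDeriv μ y).toReal with hf_def
  set πμ : Measure (Fin n → X) := Measure.pi fun _ : Fin n => μ with hπμ_def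
  set πν : Measure (Fin n → X) := Measure.pi fun _ : Fin n => ν with hπν_def
  set Lr : (Fin n → X) → ℝ := fun x => ∏ i, f (x i) with hLr_def
  set D : ℝ := (d + 1) ^ n - 1 with hD_def
  -- basic scalar facts
  have hf_int : Integrable f μ := hL2.integrable one_le_two
  have hf1 : ∫ x, f x ∂μ = 1 := by
    rw [hf_def]
    rw [Measure.integral_toReal_rnDeriv hac]
    simp
  have hff_int : Integrable (fun x => f x * f x) μ := aux_l2_mul_integrable hL2 hL2
  have hm2 : ∫ x, f x * f x ∂μ = d + 1 := by
    have e1 : ∫ x, (1 - (ν.rnDeriv μ x).toReal) ^ 2 ∂μ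
        = ∫ x, (f x * f x - 2 * f x) + 1 ∂μ :=
      integral_congr_ae (Filter.Eventually.of_forall fun x => by simp only [hf_def]; ring)
    rw [e1, integral_add (show Integrable (fun x => f x * f x - 2 * f x) μ from
        hff_int.sub (hf_int.const_mul 2)) (integrable_const 1),
      integral_sub hff_int (hf_int.const_mul 2), integral_const_mul, hf1, integral_const] at hd
    simp at hd
    linarith
  -- product-level facts
  letI : MeasureSpace X := ⟨μ⟩
  have hvol : πμ = (volume : Measure (Fin n → X)) := by
    rw [hπμ_def, volume_pi]
    rfl
  have hf1v : ∫ x, f x = 1 := hf1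
  have hm2v : ∫ x, f x * f x = d + 1 := hm2
  have hf_meas : Measurable f := (Measure.measurable_rnDeriv ν μ).ennreal_toReal
  have hLr_meas : Measurable Lr :=
    Finset.measurable_prod Finset.univ fun i _ => hf_meas.comp (measurable_pi_apply i)
  have hLr_int : Integrable Lr πμ := by
    rw [hvol]
    exact Integrable.fintype_prod (f := fun _ : Fin n => f) fun _ => hf_int
  have hLr_avg : ∫ x, Lr x ∂πμ = 1 := by
    rw [hvol, hLr_def]
    rw [volume_pi, MeasureTheory.integral_fintype_prod_eq_pow (ι := Fin n) f, hf1v]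
    simp
  have hLr2_eq : (fun x => Lr x * Lr x) = fun x : Fin n → X => ∏ i, (f (x i) * f (x i)) := by
    funext x
    rw [hLr_def, Finset.prod_mul_distrib]
  have hLr2_int : Integrable (fun x => Lr x * Lr x) πμ := by
    rw [hLr2_eq, hvol]
    exact Integrable.fintype_prod (f := fun _ : Fin n => fun y => f y * f y) fun _ => hff_int
  have hLr2 : ∫ x, Lr x * Lr x ∂πμ = (d + 1) ^ n := by
    rw [hLr2_eq, hvol]
    rw [volume_pi, MeasureTheory.integral_fintype_prod_eq_pow (ι := Fin n) (fun y => f y * f y), hm2v]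
    simp
  have hLr_mem : MemLp Lr 2 πμ := by
    refine (memLp_two_iff_integrable_sq hLr_meas.aestronglyMeasurable).2 ?_
    have : (fun x => Lr x ^ 2) = fun x => Lr x * Lr x := funext fun x => sq (Lr x)
    rw [this]
    exact hLr2_int
  -- withDensity representation of πν
  set w : (Fin n → X) → NNReal := fun x => ∏ i, (ν.rnDeriv μ (x i)).toNNReal with hw_def
  have hw_meas : Measurable w :=
    Finset.measurable_prod Finset.univ fun i _ =>
      (Measure.measurable_rnDeriv ν μ).ennreal_toNNReal.comp (measurable_pi_apply i)
  have hpi : πν = πμ.withDensity fun x => (w x : ENNReal) := aux_pi_nu_eq μ ν hac n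
  have hwr : ∀ x, (w x : ℝ) = Lr x := by
    intro x
    rw [hw_def, hLr_def]
    push_cast
    rfl
  have hnu_int : ∀ h : (Fin n → X) → ℝ, MemLp h 2 πμ → Integrable h πν := by
    intro h hh
    rw [hpi, integrable_withDensity_iff_integrable_smul hw_meas]
    have : (fun x => w x • h x) = fun x => Lr x * h x := by
      funext x
      rw [NNReal.smul_def, smul_eq_mul, hwr]
    rw [this]
    exact aux_l2_mul_integrable hLr_mem hh
  have hnu_eq : ∀ h : (Fin n → X) → ℝ, ∫ x, h x ∂πν = ∫ x, Lr x * h x ∂πμ := by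
    intro h
    rw [hpi, integral_withDensity_eq_integral_smul hw_meas]
    refine integral_congr_ae (Filter.Eventually.of_forall fun x => ?_)
    have : (fun x => w x • h x) = fun x => Lr x * h x := by
      funext y
      rw [NNReal.smul_def, smul_eq_mul, hwr]
    rw [this]
  -- positive semidefiniteness
  rw [Matrix.posSemidef_iff_dotProduct_mulVec]
  constructor
  · show _ = _
    ext i j
    simp only [Matrix.conjTranspose_apply, Matrix.of_apply, star_trivial]
    have : (fun x => (T x j - ψμ j) * (T x i - ψμ i))
        = fun x => (T x i - ψμ i) * (T x j - ψμ j) := funext fun x => by ring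
    rw [this]
    ring
  intro α
  have hTi_mem : ∀ i, MemLp (fun x => T x i - ψμ i) 2 πμ :=
    fun i => (hT i).sub (memLp_const _)
  have hterm_mem : ∀ i, MemLp (fun x => α i * (T x i - ψμ i)) 2 πμ :=
    fun i => (hTi_mem i).const_mul _
  set g : (Fin n → X) → ℝ := fun x => ∑ i, α i * (T x i - ψμ i) with hg_def
  have hg_mem : MemLp g 2 πμ := memLp_finset_sum _ fun i _ => hterm_mem i
  set c : Fin q → ℝ := fun i => ψν i - ψμ i with hc_def
  set S : ℝ := ∑ i, α i * c i with hS_def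
  have hcov_int : ∀ i j, Integrable (fun x => (T x i - ψμ i) * (T x j - ψμ j)) πμ :=
    fun i j => aux_l2_mul_integrable (hTi_mem i) (hTi_mem j)
  have hgg_int : Integrable (fun x => g x * g x) πμ := aux_l2_mul_integrable hg_mem hg_mem
  have hgg_nonneg : 0 ≤ ∫ x, g x * g x ∂πμ :=
    integral_nonneg fun x => mul_self_nonneg _
  -- the quadratic form identity
  have hMv : ∀ i, (∑ j, ((∫ x, (T x i - ψμ i) * (T x j - ψμ j) ∂πμ)
        - (ψμ i - ψν i) * (ψμ j - ψν j) / D) * α j)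
      = (∫ x, (T x i - ψμ i) * g x ∂πμ) - c i * S / D := by
    intro i
    have h1 : ∑ j, (∫ x, (T x i - ψμ i) * (T x j - ψμ j) ∂πμ) * α j
        = ∫ x, (T x i - ψμ i) * g x ∂πμ := by
      simp_rw [← integral_mul_const]
      rw [← integral_finset_sum _ (fun j _ => (hcov_int i j).mul_const (α j))]
      refine integral_congr_ae (Filter.Eventually.of_forall fun x => ?_)
      simp only [hg_def]
      rw [Finset.mul_sum]
      exact Finset.sum_congr rfl fun j _ => by ring
    have h2 : ∑ j, ((ψμ i - ψν i) * (ψμ j - ψν j) / D) * α j = c i * S / D := by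
      rw [hS_def, Finset.mul_sum, Finset.sum_div]
      exact Finset.sum_congr rfl fun j _ => by rw [hc_def]; ring
    calc ∑ j, ((∫ x, (T x i - ψμ i) * (T x j - ψμ j) ∂πμ)
          - (ψμ i - ψν i) * (ψμ j - ψν j) / D) * α j
        = (∑ j, (∫ x, (T x i - ψμ i) * (T x j - ψμ j) ∂πμ) * α j)
          - ∑ j, ((ψμ i - ψν i) * (ψμ j - ψν j) / D) * α j := by
          rw [← Finset.sum_sub_distrib]
          exact Finset.sum_congr rfl fun j _ => by ring
      _ = _ := by rw [h1, h2]
  have hquad : ∑ i, α i * ((∫ x, (T x i - ψμ i) * g x ∂πμ) - c i * S / D)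
      = (∫ x, g x * g x ∂πμ) - S * S / D := by
    have h1 : ∑ i, α i * ∫ x, (T x i - ψμ i) * g x ∂πμ = ∫ x, g x * g x ∂πμ := by
      have : ∀ i, α i * ∫ x, (T x i - ψμ i) * g x ∂πμ
          = ∫ x, α i * ((T x i - ψμ i) * g x) ∂πμ := fun i => (integral_const_mul _ _).symm
      simp_rw [this]
      rw [← integral_finset_sum _ (fun i _ =>
        (aux_l2_mul_integrable (hTi_mem i) hg_mem).const_mul (α i))]
      refine integral_congr_ae (Filter.Eventually.of_forall fun x => ?_)
      simp only [hg_def]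
      rw [Finset.sum_mul]
      exact Finset.sum_congr rfl fun i _ => by ring
    have h2 : ∑ i, α i * (c i * S / D) = S * S / D := by
      rw [hS_def, Finset.sum_mul, Finset.sum_div]
      exact Finset.sum_congr rfl fun i _ => by ring
    calc ∑ i, α i * ((∫ x, (T x i - ψμ i) * g x ∂πμ) - c i * S / D)
        = (∑ i, α i * ∫ x, (T x i - ψμ i) * g x ∂πμ) - ∑ i, α i * (c i * S / D) := by
          rw [← Finset.sum_sub_distrib]
          exact Finset.sum_congr rfl fun i _ => by ring
      _ = _ := by rw [h1, h2]
  -- the Chapman-Robbins bound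
  have hg0 : ∫ x, g x ∂πμ = 0 := by
    simp only [hg_def]
    rw [integral_finset_sum _ (fun i _ => (hterm_mem i).integrable one_le_two)]
    refine Finset.sum_eq_zero fun i _ => ?_
    rw [integral_const_mul, integral_sub ((hT i).integrable one_le_two) (integrable_const _),
      hμ i, integral_const]
    simp
  have hgS : ∫ x, g x * (Lr x - 1) ∂πμ = S := by
    have e1 : (fun x => g x * (Lr x - 1)) = fun x => Lr x * g x - g x :=
      funext fun x => by ring
    rw [e1, integral_sub (by
        have := aux_l2_mul_integrable hLr_mem hg_mem
        exact this) (hg_mem.integrable one_le_two), hg0, sub_zero, ← hnu_eq g]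
    simp only [hg_def]
    rw [integral_finset_sum _ (fun i _ => hnu_int _ (hterm_mem i)), hS_def]
    refine Finset.sum_congr rfl fun i _ => ?_
    rw [integral_const_mul, integral_sub (hnu_int _ (hT i)) (integrable_const _),
      hν i, integral_const, hc_def]
    simp
  have hLrm1_mem : MemLp (fun x => Lr x - 1) 2 πμ := hLr_mem.sub (memLp_const 1)
  have hvar1 : ∫ x, (Lr x - 1) * (Lr x - 1) ∂πμ = D := by
    have e1 : (fun x => (Lr x - 1) * (Lr x - 1)) = fun x => (Lr x * Lr x - 2 * Lr x) + 1 :=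
      funext fun x => by ring
    rw [e1, integral_add (show Integrable (fun x => Lr x * Lr x - 2 * Lr x) πμ from
        hLr2_int.sub (hLr_int.const_mul 2)) (integrable_const 1),
      integral_sub hLr2_int (hLr_int.const_mul 2), integral_const_mul, hLr2, hLr_avg,
      integral_const, hD_def]
    simp
    ring
  have hCS := aux_l2_cauchy hg_mem hLrm1_mem
  rw [hgS, hvar1] at hCS
  have hD0 : 0 ≤ D := by
    rw [hD_def]
    have : (1 : ℝ) ≤ (d + 1) ^ n := one_le_pow₀ (by linarith)
    linarith
  -- final computation
  show 0 ≤ _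
  have hform : dotProduct (star α) ((Matrix.of fun i j =>
      (∫ x, (T x i - ψμ i) * (T x j - ψμ j) ∂πμ)
        - (ψμ i - ψν i) * (ψμ j - ψν j) / D).mulVec α)
      = ∑ i, α i * ∑ j, ((∫ x, (T x i - ψμ i) * (T x j - ψμ j) ∂πμ)
        - (ψμ i - ψν i) * (ψμ j - ψν j) / D) * α j := by
    simp only [dotProduct, Matrix.mulVec, Matrix.of_apply, Pi.star_apply, star_trivial]
  rw [hform]
  have hsum : ∑ i, α i * ∑ j, ((∫ x, (T x i - ψμ i) * (T x j - ψμ j) ∂πμ)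
        - (ψμ i - ψν i) * (ψμ j - ψν j) / D) * α j
      = (∫ x, g x * g x ∂πμ) - S * S / D := by
    rw [← hquad]
    exact Finset.sum_congr rfl fun i _ => by rw [hMv i]
  rw [hsum]
  rcases hD0.eq_or_lt with h | h
  · rw [← h, div_zero, sub_zero]
    exact hgg_nonneg
  · have hle : S * S / D ≤ ∫ x, g x * g x ∂πμ := by
      rw [div_le_iff₀ h]
      calc S * S = S ^ 2 := (sq S).symm
        _ ≤ _ := hCS
    linarith
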